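/- arXiv:1507.04871 — 4 statements merged into one kernel-verified Lean document; each statement's English description precedes it below -/
import Mathlib

section
/- Let 𝔤 be a finite-dimensional real Lie algebra, let V₁ ⊆ 𝔤 be a linear subspace and S ⊆ V₁ a linear subspace. Let π : 𝔤 → 𝔤/V₁ be the quotient map of vector spaces and let Φ : V₁ → Hom_ℝ(S, 𝔤/V₁) be the linear map defined by Φ(ξ)(X) = π(⁅ξ, X⁆). If Φ is surjective and Φ(ξ) = 0 for every ξ ∈ S, then dim V₁ − dim S ≥ (dim S) · (dim 𝔤 − dim V₁). -/
/-- Gromov's necessary dimension condition for the existence of an Ω-regular,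
Ω-isotropic subspace `S` of `V₁`: if the linear map
`Φ : V₁ → Hom_ℝ(S, 𝔤/V₁)`, `Φ(ξ)(X) = π ⁅ξ, X⁆`, is surjective and vanishes on `S`,
then `dim V₁ − dim S ≥ dim S · (dim 𝔤 − dim V₁)`. -/
theorem gromov_dimension_condition
    (𝔤 : Type*) [LieRing 𝔤] [LieAlgebra ℝ 𝔤] [FiniteDimensional ℝ 𝔤]
    (V₁ S : Submodule ℝ 𝔤) (hS : S ≤ V₁)
    (Φ : V₁ →ₗ[ℝ] (S →ₗ[ℝ] 𝔤 ⧸ V₁))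
    (hΦ : ∀ (ξ : V₁) (X : S), Φ ξ X = Submodule.mkQ V₁ ⁅(ξ : 𝔤), (X : 𝔤)⁆)
    (hsurj : Function.Surjective Φ)
    (hiso : ∀ ξ : V₁, (ξ : 𝔤) ∈ S → Φ ξ = 0) :
    (Module.finrank ℝ S : ℤ) * ((Module.finrank ℝ 𝔤 : ℤ) - (Module.finrank ℝ V₁ : ℤ))
      ≤ (Module.finrank ℝ V₁ : ℤ) - (Module.finrank ℝ S : ℤ) := by
  have hquot : Module.finrank ℝ (𝔤 ⧸ V₁) + Module.finrank ℝ V₁ = Module.finrank ℝ 𝔤 :=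
    Submodule.finrank_quotient_add_finrank V₁
  have hrank : Module.finrank ℝ (LinearMap.range Φ) + Module.finrank ℝ (LinearMap.ker Φ)
      = Module.finrank ℝ V₁ := LinearMap.finrank_range_add_finrank_ker Φ
  have hrange : Module.finrank ℝ (LinearMap.range Φ)
      = Module.finrank ℝ S * Module.finrank ℝ (𝔤 ⧸ V₁) := by
    rw [LinearMap.range_eq_top.mpr hsurj, finrank_top, Module.finrank_linearMap]
  have hker : Module.finrank ℝ S ≤ Module.finrank ℝ (LinearMap.ker Φ) := by
    have hle : S.comap V₁.subtype ≤ LinearMap.ker Φ := by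
      intro ξ hξ
      exact hiso ξ hξ
    have := Submodule.finrank_mono hle
    rwa [(Submodule.comapSubtypeEquivOfLe hS).finrank_eq] at this
  have hmono : Module.finrank ℝ V₁ ≤ Module.finrank ℝ 𝔤 := Submodule.finrank_le V₁
  -- quotient finrank as a difference
  have hq : (Module.finrank ℝ (𝔤 ⧸ V₁) : ℤ)
      = (Module.finrank ℝ 𝔤 : ℤ) - (Module.finrank ℝ V₁ : ℤ) := by omega
  have := hrank
  rw [hrange] at this
  have h2 : (Module.finrank ℝ S : ℤ) * (Module.finrank ℝ (𝔤 ⧸ V₁) : ℤ)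
      + (Module.finrank ℝ (LinearMap.ker Φ) : ℤ) = (Module.finrank ℝ V₁ : ℤ) := by
    exact_mod_cast this
  rw [hq] at h2
  omega
end

section
/- Let 𝔤 be a finite-dimensional 2-step nilpotent Lie algebra over ℝ (⁅⁅x, y⁆, z⁆ = 0), and let B₁, B₂ be finite subsets of 𝔤 such that B₁ ∪ B₂ is an ℝ-basis of 𝔤, the ℝ-linear span of B₂ equals the derived subalgebra ⁅𝔤, 𝔤⁆, and (1/2)⁅a, b⁆ lies in the ℤ-span of B₂ for all a, b ∈ B₁. Then the ℤ-span 𝒵 of B₁ ∪ B₂ is a subgroup of the group (𝔤, *) with x * y = x + y + (1/2)⁅x, y⁆: it contains 0, is closed under *, and is closed under the inverse x ↦ −x. -/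
/-- If `B₁ ∪ B₂` is an ℝ-basis of a finite-dimensional 2-step nilpotent real Lie
algebra `𝔤`, the ℝ-span of `B₂` is the derived subalgebra, and `(1/2)⁅a, b⁆` lies
in the ℤ-span of `B₂` for all `a, b ∈ B₁`, then the ℤ-span `𝒵` of `B₁ ∪ B₂` is a
subgroup of the BCH group `(𝔤, *)`: it contains `0`, is closed under
`x * y = x + y + (1/2)⁅x, y⁆`, and is closed under `x ↦ −x`. -/
theorem zspan_is_subgroup_of_bch_group
    (𝔤 : Type*) [LieRing 𝔤] [LieAlgebra ℝ 𝔤] [FiniteDimensional ℝ 𝔤]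
    (h2 : ∀ x y z : 𝔤, ⁅⁅x, y⁆, z⁆ = 0)
    (B₁ B₂ : Finset 𝔤)
    (hli : LinearIndependent ℝ (Subtype.val : (((B₁ : Set 𝔤) ∪ (B₂ : Set 𝔤) : Set 𝔤)) → 𝔤))
    (hspan : Submodule.span ℝ ((B₁ : Set 𝔤) ∪ (B₂ : Set 𝔤)) = ⊤)
    (hB₂ : Submodule.span ℝ (B₂ : Set 𝔤)
      = Submodule.span ℝ {z : 𝔤 | ∃ x y : 𝔤, ⁅x, y⁆ = z})
    (hhalf : ∀ a ∈ B₁, ∀ b ∈ B₁,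
      (1 / 2 : ℝ) • ⁅a, b⁆ ∈ Submodule.span ℤ (B₂ : Set 𝔤))
    (m : 𝔤 → 𝔤 → 𝔤)
    (hm : ∀ x y : 𝔤, m x y = x + y + (1 / 2 : ℝ) • ⁅x, y⁆) :
    (0 : 𝔤) ∈ Submodule.span ℤ ((B₁ : Set 𝔤) ∪ (B₂ : Set 𝔤)) ∧
    (∀ x ∈ Submodule.span ℤ ((B₁ : Set 𝔤) ∪ (B₂ : Set 𝔤)),
      ∀ y ∈ Submodule.span ℤ ((B₁ : Set 𝔤) ∪ (B₂ : Set 𝔤)),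
        m x y ∈ Submodule.span ℤ ((B₁ : Set 𝔤) ∪ (B₂ : Set 𝔤))) ∧
    (∀ x ∈ Submodule.span ℤ ((B₁ : Set 𝔤) ∪ (B₂ : Set 𝔤)),
      -x ∈ Submodule.span ℤ ((B₁ : Set 𝔤) ∪ (B₂ : Set 𝔤))) := by

  -- Elements of the ℝ-span of brackets are central.
  have hcent : ∀ b ∈ Submodule.span ℝ {z : 𝔤 | ∃ x y : 𝔤, ⁅x, y⁆ = z},
      ∀ z : 𝔤, ⁅b, z⁆ = 0 := by
    intro b hb
    induction hb using Submodule.span_induction with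
    | mem w hw => obtain ⟨x, y, rfl⟩ := hw; exact h2 x y
    | zero => intro z; simp
    | add u v _ _ hu hv => intro z; rw [add_lie, hu, hv, add_zero]
    | smul t u _ hu => intro z; rw [smul_lie, hu, smul_zero]
  have hcent₂ : ∀ b ∈ (B₂ : Set 𝔤), ∀ z : 𝔤, ⁅b, z⁆ = 0 := by
    intro b hb
    exact hcent b (hB₂ ▸ Submodule.subset_span hb)
  -- The key claim: half-brackets of elements of the ℤ-span land in the ℤ-span of B₂.
  have key : ∀ x ∈ Submodule.span ℤ ((B₁ : Set 𝔤) ∪ (B₂ : Set 𝔤)),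
      ∀ y ∈ Submodule.span ℤ ((B₁ : Set 𝔤) ∪ (B₂ : Set 𝔤)),
      (1 / 2 : ℝ) • ⁅x, y⁆ ∈ Submodule.span ℤ (B₂ : Set 𝔤) := by
    intro x hx
    induction hx using Submodule.span_induction with
    | mem a ha =>
      intro y hy
      induction hy using Submodule.span_induction with
      | mem b hb =>
        rcases ha with ha | ha
        · rcases hb with hb | hb
          · exact hhalf a ha b hb
          · rw [← lie_skew, hcent₂ b hb a, neg_zero, smul_zero]
            exact zero_mem _
        · rw [hcent₂ a ha b, smul_zero]; exact zero_mem _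
      | zero => rw [lie_zero, smul_zero]; exact zero_mem _
      | add u v _ _ hu hv =>
        rw [lie_add, smul_add]; exact add_mem hu hv
      | smul n u _ hu =>
        rw [lie_zsmul, smul_comm]; exact Submodule.smul_mem _ n hu
    | zero => intro y hy; rw [zero_lie, smul_zero]; exact zero_mem _
    | add u v _ _ hu hv =>
      intro y hy
      rw [add_lie, smul_add]; exact add_mem (hu y hy) (hv y hy)
    | smul n u _ hu =>
      intro y hy
      rw [zsmul_lie, smul_comm]; exact Submodule.smul_mem _ n (hu y hy)
  have hsub : Submodule.span ℤ (B₂ : Set 𝔤)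
      ≤ Submodule.span ℤ ((B₁ : Set 𝔤) ∪ (B₂ : Set 𝔤)) :=
    Submodule.span_mono Set.subset_union_right
  refine ⟨zero_mem _, ?_, fun x hx => neg_mem hx⟩
  intro x hx y hy
  rw [hm]
  exact add_mem (add_mem hx hy) (hsub (key x hx y hy))
end

section
/- Let ℍ be the real quaternions, im(q) = q − re(q), Im ℍ = {q ∈ ℍ : re(q) = 0}, and define ω : ℍⁿ × ℍⁿ → Im ℍ by ω(z, w) = Σᵢ im(zᵢ · conj(wᵢ)). Let S = ℝⁿ ⊆ ℍⁿ be the subspace of vectors whose coordinates are real quaternions. Then: (i) ω(z, w) = 0 for all z, w ∈ S (S is Ω-isotropic), and (ii) for every ℝ-linear map φ : S → Im ℍ there exists ξ ∈ ℍⁿ such that ω(ξ, s) = φ(s) for all s ∈ S (S is Ω-regular). In particular the first layer V₁ = ℍⁿ of the quaternionic Heisenberg Lie algebra 𝔥ⁿ_ℍ contains an n-dimensional Ω-regular, Ω-isotropic subspace. -/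
/-- The purely imaginary quaternions `Im ℍ = {q : ℍ | re q = 0}`, as an ℝ-subspace
of the quaternions. -/
def imH : Submodule ℝ (Quaternion ℝ) where
  carrier := {q | q.re = 0}
  add_mem' := by
    intro a b ha hb
    simp only [Set.mem_setOf_eq] at *
    simp [ha, hb]
  zero_mem' := by simp [Quaternion.re_zero]
  smul_mem' := by
    intro c q hq
    simp only [Set.mem_setOf_eq] at *
    simp [Quaternion.re_smul, hq]

/-- The curvature form `ω(z, w) = Σᵢ im(zᵢ · conj(wᵢ))` of the quaternionic
Heisenberg Lie algebra. -/
noncomputable def omegaH (n : ℕ) (z w : Fin n → Quaternion ℝ) : Quaternion ℝ :=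
  ∑ i, Quaternion.im (z i * star (w i))

/-- The subspace `S = ℝⁿ ⊆ ℍⁿ` of vectors all of whose coordinates are real
quaternions. -/
def realVectors (n : ℕ) : Submodule ℝ (Fin n → Quaternion ℝ) where
  carrier := {z | ∀ i, Quaternion.im (z i) = 0}
  add_mem' := by
    intro a b ha hb i
    simp [Quaternion.im_add, ha i, hb i]
  zero_mem' := by intro i; simp [Quaternion.im_zero]
  smul_mem' := by
    intro c z hz i
    simp [Quaternion.im_smul, hz i]

lemma real_of_im_zero (q : Quaternion ℝ) (h : q.im = 0) : q = (q.re : Quaternion ℝ) := by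
  have := Quaternion.re_add_im q
  rw [h] at this; simpa using this.symm

lemma im_eq_self_of_re_zero (q : Quaternion ℝ) (h : q.re = 0) : q.im = q := by
  have := Quaternion.re_add_im q
  rw [h] at this; simpa using this

lemma coord_mem_realVectors (n : ℕ) (s : ↥(realVectors n)) (i : Fin n) :
    (s : Fin n → Quaternion ℝ) i = (((s : Fin n → Quaternion ℝ) i).re : Quaternion ℝ) :=
  real_of_im_zero _ (s.2 i)

/-- The basis vector `eⱼ` of `S = ℝⁿ`. -/
noncomputable def eVec (n : ℕ) (j : Fin n) : ↥(realVectors n) :=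
  ⟨Pi.single j (1 : Quaternion ℝ), by
    intro i
    by_cases h : i = j
    · subst h; simp [Quaternion.im_one]
    · simp [Pi.single_apply, h, Quaternion.im_zero]⟩

lemma s_eq_sum (n : ℕ) (s : ↥(realVectors n)) :
    s = ∑ j, ((s : Fin n → Quaternion ℝ) j).re • eVec n j := by
  apply Subtype.ext
  have : ((∑ j, ((s : Fin n → Quaternion ℝ) j).re • eVec n j : ↥(realVectors n)) :
      Fin n → Quaternion ℝ) = ∑ j, ((s : Fin n → Quaternion ℝ) j).re •
      (Pi.single j (1 : Quaternion ℝ) : Fin n → Quaternion ℝ) := by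
    push_cast [Submodule.coe_sum]
    rfl
  rw [this]
  funext i
  rw [Finset.sum_apply]
  have : ∀ j, (((s : Fin n → Quaternion ℝ) j).re •
      (Pi.single j (1 : Quaternion ℝ) : Fin n → Quaternion ℝ)) i =
      if i = j then (((s : Fin n → Quaternion ℝ) j).re : Quaternion ℝ) else 0 := by
    intro j
    by_cases h : i = j
    · subst h
      simp only [Pi.smul_apply, Pi.single_eq_same, if_pos rfl]
      rw [← Quaternion.coe_one, ← Quaternion.coe_smul, smul_eq_mul, mul_one]
      simp
    · simp [Pi.single_apply, h]
  simp only [this]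
  rw [Finset.sum_ite_eq]
  simp only [Finset.mem_univ, if_true]
  exact coord_mem_realVectors n s i

/-- `S ≃ₗ[ℝ] ℝⁿ`. -/
noncomputable def realVectorsEquiv (n : ℕ) : ↥(realVectors n) ≃ₗ[ℝ] (Fin n → ℝ) where
  toFun s := fun i => ((s : Fin n → Quaternion ℝ) i).re
  map_add' a b := by funext i; simp
  map_smul' c a := by funext i; simp [Quaternion.re_smul]
  invFun r := ⟨fun i => (r i : Quaternion ℝ), fun i => by simp⟩
  left_inv s := by
    apply Subtype.ext; funext i
    exact (coord_mem_realVectors n s i).symm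
  right_inv r := by funext i; simp

/-- The subspace `S = ℝⁿ` of the first layer `V₁ = ℍⁿ` of the quaternionic
Heisenberg Lie algebra `𝔥ⁿ_ℍ` is Ω-isotropic (`ω` vanishes on `S × S`),
Ω-regular (every ℝ-linear map `φ : S → Im ℍ` is of the form `ω(ξ, ·)|_S` for
some `ξ ∈ ℍⁿ`), and has dimension `n`. -/
theorem quaternionic_heisenberg_regular_isotropic (n : ℕ) :
    (∀ z ∈ realVectors n, ∀ w ∈ realVectors n, omegaH n z w = 0) ∧
    (∀ φ : ↥(realVectors n) →ₗ[ℝ] ↥imH,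
      ∃ ξ : Fin n → Quaternion ℝ,
        ∀ s : ↥(realVectors n), omegaH n ξ (s : Fin n → Quaternion ℝ)
          = (φ s : Quaternion ℝ)) ∧
    Module.finrank ℝ ↥(realVectors n) = n := by
  refine ⟨?_, ?_, ?_⟩
  · intro z hz w hw
    unfold omegaH
    apply Finset.sum_eq_zero
    intro i _
    rw [real_of_im_zero _ (hz i), real_of_im_zero _ (hw i)]
    simp [← Quaternion.coe_mul]
  · intro φ
    refine ⟨fun j => (φ (eVec n j) : Quaternion ℝ), fun s => ?_⟩
    unfold omegaH
    have key : ∀ i, Quaternion.im ((φ (eVec n i) : Quaternion ℝ) *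
        star ((s : Fin n → Quaternion ℝ) i)) =
        ((s : Fin n → Quaternion ℝ) i).re • (φ (eVec n i) : Quaternion ℝ) := by
      intro i
      rw [coord_mem_realVectors n s i]
      rw [Quaternion.star_coe, Quaternion.mul_coe_eq_smul]
      rw [Quaternion.im_smul]
      rw [im_eq_self_of_re_zero _ (φ (eVec n i)).2]
      simp
    simp only [key]
    conv_rhs => rw [s_eq_sum n s]
    rw [map_sum]
    push_cast
    simp
  · rw [(realVectorsEquiv n).finrank_eq]
    simp
end

section
/- Let n ≥ 4, let 𝔫ₙ be the Lie algebra of strictly upper triangular real n×n matrices with bracket ⁅A, B⁆ = AB − BA, and let V₁ = span_ℝ{E_{i,i+1} : 1 ≤ i ≤ n−1} be the span of the superdiagonal elementary matrices. Let π : 𝔫ₙ → 𝔫ₙ/V₁ be the quotient map of vector spaces. Then there is no linear subspace S ⊆ V₁ with dim_ℝ S ≥ 2 such that both π(⁅s, s'⁆) = 0 for all s, s' ∈ S and the linear map Φ : V₁ → Hom_ℝ(S, 𝔫ₙ/V₁), Φ(ξ)(X) = π(⁅ξ, X⁆), is surjective. That is, 𝔫ₙ has no Ω-regular, Ω-isotropic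 subspace of its first layer of dimension at least 2. -/
/-- The product of two strictly upper triangular matrices is strictly upper
triangular. -/
theorem strict_upper_mul {n : ℕ} (a b : Matrix (Fin n) (Fin n) ℝ)
    (ha : ∀ i j : Fin n, j ≤ i → a i j = 0)
    (hb : ∀ i j : Fin n, j ≤ i → b i j = 0) :
    ∀ i j : Fin n, j ≤ i → (a * b) i j = 0 := by
  intro i j hij
  rw [Matrix.mul_apply]
  refine Finset.sum_eq_zero fun k _ => ?_
  rcases le_or_gt k i with h | h
  · rw [ha i k h, zero_mul]
  · rw [hb k j (hij.trans h.le), mul_zero]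

attribute [local instance 100] LieRing.ofAssociativeRing

/-- The Lie algebra `𝔫ₙ` of strictly upper triangular real `n × n` matrices, as a
Lie subalgebra of the matrix algebra with `⁅A, B⁆ = AB − BA`. -/
def strictUpper (n : ℕ) : LieSubalgebra ℝ (Matrix (Fin n) (Fin n) ℝ) where
  carrier := {A | ∀ i j : Fin n, j ≤ i → A i j = 0}
  add_mem' := by
    intro a b ha hb i j hij
    simp [Matrix.add_apply, ha i j hij, hb i j hij]
  zero_mem' := by intro i j hij; simp
  smul_mem' := by
    intro c a ha i j hij
    simp [Matrix.smul_apply, ha i j hij]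
  lie_mem' := by
    intro a b ha hb i j hij
    show ⁅a, b⁆ i j = 0
    rw [Ring.lie_def]
    rw [Matrix.sub_apply, strict_upper_mul a b ha hb i j hij,
      strict_upper_mul b a hb ha i j hij, sub_zero]

/-- The first layer `V₁` of the natural grading of `𝔫ₙ`: the span of the
superdiagonal elementary matrices `E_{i,i+1}`. -/
def superDiagonalIn (n : ℕ) : Submodule ℝ ↥(strictUpper n) :=
  Submodule.span ℝ (Set.range fun i : Fin (n - 1) =>
    (⟨Matrix.single
        (⟨i.1, by have := i.2; omega⟩ : Fin n) ⟨i.1 + 1, by have := i.2; omega⟩ (1 : ℝ),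
      by
        intro a b hba
        rw [Matrix.single_apply_of_ne]
        rintro ⟨rfl, rfl⟩
        exact absurd hba (by simp [Fin.lt_def, Fin.le_def])⟩ : ↥(strictUpper n)))


open Module in
lemma surj_finrank_le {M N : Type*} [AddCommGroup M] [Module ℝ M]
    [AddCommGroup N] [Module ℝ N] [FiniteDimensional ℝ M]
    (f : M →ₗ[ℝ] N) (h : Function.Surjective f) :
    finrank ℝ N ≤ finrank ℝ M := by
  rw [← finrank_top ℝ N, ← LinearMap.range_eq_top.mpr h]
  exact f.finrank_range_le

/-- For `n ≥ 4`, the Lie algebra `𝔫ₙ` of strictly upper triangular real `n × n`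
matrices has no Ω-regular, Ω-isotropic subspace of its first layer `V₁` of
dimension at least `2`: there is no subspace `S ⊆ V₁` with `dim S ≥ 2` such that
all brackets of elements of `S` project to `0` in `𝔫ₙ/V₁` and the linear map
`Φ : V₁ → Hom_ℝ(S, 𝔫ₙ/V₁)`, `Φ(ξ)(X) = π(⁅ξ, X⁆)`, is surjective. -/
theorem no_regular_isotropic_in_strict_upper (n : ℕ) (hn : 4 ≤ n) :
    ¬ ∃ S : Submodule ℝ ↥(strictUpper n),
        S ≤ superDiagonalIn n ∧
        2 ≤ Module.finrank ℝ ↥S ∧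
        (∀ s s' : ↥S,
          Submodule.mkQ (superDiagonalIn n) ⁅(s : ↥(strictUpper n)), (s' : ↥(strictUpper n))⁆ = 0) ∧
        (∀ φ : ↥S →ₗ[ℝ] (↥(strictUpper n) ⧸ superDiagonalIn n),
          ∃ ξ ∈ superDiagonalIn n,
            ∀ X : ↥S, φ X = Submodule.mkQ (superDiagonalIn n) ⁅ξ, (X : ↥(strictUpper n))⁆) := by
  rintro ⟨S, hSV, hS2, hiso, hsurj⟩
  set V₁ := superDiagonalIn n with hVdef
  set Q := ↥(strictUpper n) ⧸ V₁
  -- the map f : strictUpper → ℝ^(n-2) reading the second superdiagonal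
  have h2 : ∀ i : Fin (n - 2), (i.1 : ℕ) < n := fun i => by have := i.2; omega
  have h2' : ∀ i : Fin (n - 2), (i.1 + 2 : ℕ) < n := fun i => by have := i.2; omega
  let f : ↥(strictUpper n) →ₗ[ℝ] (Fin (n - 2) → ℝ) :=
    { toFun := fun A i => (A : Matrix (Fin n) (Fin n) ℝ) ⟨i.1, h2 i⟩ ⟨i.1 + 2, h2' i⟩
      map_add' := fun A B => by ext i; simp
      map_smul' := fun c A => by ext i; rfl }
  have hker : V₁ ≤ LinearMap.ker f := by
    rw [hVdef, superDiagonalIn, Submodule.span_le]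
    rintro _ ⟨j, rfl⟩
    simp only [SetLike.mem_coe, LinearMap.mem_ker]
    ext i
    show Matrix.single _ _ (1:ℝ) _ _ = 0
    rw [Matrix.single_apply_of_ne]
    rintro ⟨h1, h2⟩
    rw [Fin.ext_iff] at h1 h2
    simp only at h1 h2
    omega
  have hfsurj : Function.Surjective f := by
    intro v
    classical
    refine ⟨⟨∑ i : Fin (n - 2), v i • Matrix.single ⟨i.1, h2 i⟩ ⟨i.1 + 2, h2' i⟩ (1:ℝ), ?_⟩, ?_⟩
    · intro a b hba
      rw [Matrix.sum_apply]
      refine Finset.sum_eq_zero fun k _ => ?_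
      rw [Matrix.smul_apply, Matrix.single_apply_of_ne, smul_zero]
      rintro ⟨rfl, rfl⟩
      rw [Fin.le_def] at hba
      simp at hba
    · ext i
      show (∑ k : Fin (n-2), v k • Matrix.single _ _ (1:ℝ)) _ _ = v i
      rw [Matrix.sum_apply]
      rw [Finset.sum_eq_single i]
      · simp [Matrix.single_apply_same]
      · intro k _ hk
        rw [Matrix.smul_apply, Matrix.single_apply_of_ne, smul_zero]
        rintro ⟨h1, -⟩
        exact hk (Fin.ext (by simpa using h1))
      · intro h; exact absurd (Finset.mem_univ i) h
  -- finrank Q ≥ n - 2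
  have hQ : n - 2 ≤ Module.finrank ℝ Q := by
    have hg : Function.Surjective (V₁.liftQ f hker) := by
      intro v
      obtain ⟨A, hA⟩ := hfsurj v
      exact ⟨V₁.mkQ A, by simpa using hA⟩
    have := surj_finrank_le (V₁.liftQ f hker) hg
    simpa using this
  -- finrank V₁ ≤ n - 1
  have hV : Module.finrank ℝ ↥V₁ ≤ n - 1 := by
    refine (finrank_span_le_card _).trans ?_
    have := Fintype.card_range_le (fun i : Fin (n - 1) =>
      (⟨Matrix.single
        (⟨i.1, by have := i.2; omega⟩ : Fin n) ⟨i.1 + 1, by have := i.2; omega⟩ (1 : ℝ), by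
        intro a b hba
        rw [Matrix.single_apply_of_ne]
        rintro ⟨rfl, rfl⟩
        exact absurd hba (by simp [Fin.lt_def, Fin.le_def])⟩ : ↥(strictUpper n)))
    rw [Set.toFinset_card]
    simpa using this
  -- the map Ψ : V₁ → Hom(S, Q)
  let Ψ : ↥V₁ →ₗ[ℝ] (↥S →ₗ[ℝ] Q) :=
    { toFun := fun ξ =>
        { toFun := fun X => V₁.mkQ ⁅(ξ : ↥(strictUpper n)), (X : ↥(strictUpper n))⁆
          map_add' := fun X Y => by simp [lie_add]
          map_smul' := fun c X => by simp [lie_smul] }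
      map_add' := fun ξ η => by ext X; simp [add_lie]
      map_smul' := fun c ξ => by ext X; simp [smul_lie] }
  have hΨsurj : Function.Surjective Ψ := by
    intro φ
    obtain ⟨ξ, hξ, hφ⟩ := hsurj φ
    exact ⟨⟨ξ, hξ⟩, by ext X; exact (hφ X).symm⟩
  have hle := surj_finrank_le Ψ hΨsurj
  rw [Module.finrank_linearMap] at hle
  have h1 : 2 * (n - 2) ≤ Module.finrank ℝ ↥S * Module.finrank ℝ Q :=
    Nat.mul_le_mul hS2 hQ
  omega
end
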